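/- (Key relation for iteration A, deterministic case) Let f be convex, L-smooth, and μ-strongly convex (μ ≥ 0), ψ convex lower semicontinuous, F = f + ψ with minimizer x*. Let x_k = Prox_{η ψ}[x_{k-1} - η ∇f(x_{k-1})] with 0 < η ≤ 1/L. Define d_k(x) = (1-δ)d_{k-1}(x) + δ(f(x_{k-1}) + ⟨∇f(x_{k-1}), x - x_{k-1}⟩ + (μ/2)‖x - x_{k-1}‖² + ψ(x_k) + ⟨ψ'(x_k), x - x_k⟩), where ψ'(x_k) = (x_{k-1} - x_k)/η - ∇f(x_{k-1}), d_0(x) = d_0* + (γ_0/2)‖x - x_0‖², δ = ηγ with γ = (1-δ)γ_0 + μδ and γ_0 ≥ μ. Then x_k minimizes d_k, d_k(x) = d_k(x_k) + (γ/2)‖x - x_k‖², and δ(F(x_k) - F*) + d_k(x*) - d_k(x_k) ≤ (1-δ)(d_{k-1}(x*) - d_{k-1}(x_{k-1})). -/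

import Mathlib

open RealInnerProductSpace

section Aux

variable {p : ℕ}

local notation "E" => EuclideanSpace ℝ (Fin p)

lemma line_hasDerivAt (f : E → ℝ) (f' : E → E) (hf : ∀ x, HasGradientAt f (f' x) x)
    (x v : E) (t : ℝ) :
    HasDerivAt (fun s : ℝ => f (x + s • v)) ⟪f' (x + t • v), v⟫ t := by
  have h1 := (hf (x + t • v)).hasFDerivAt
  have h2 : HasDerivAt (fun s : ℝ => x + s • v) v t := by
    simpa using ((hasDerivAt_id t).smul_const v).const_add x
  simpa [Function.comp_def] using h1.comp_hasDerivAt t h2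

lemma convex_slope_le (φ : E → ℝ) (hc : ConvexOn ℝ Set.univ φ) (x y : E) (d : ℝ)
    (hd : HasDerivAt (fun t : ℝ => φ (x + t • (y - x))) d 0) : φ x + d ≤ φ y := by
  have key : ∀ t : ℝ, t ∈ Set.Ioc (0:ℝ) 1 →
      slope (fun t : ℝ => φ (x + t • (y - x))) 0 t ≤ φ y - φ x := by
    intro t ht
    have h := hc.2 (Set.mem_univ x) (Set.mem_univ y)
      (show (0:ℝ) ≤ 1 - t by linarith [ht.2]) ht.1.le (by ring : (1 - t) + t = 1)
    have hxy : (1 - t) • x + t • y = x + t • (y - x) := by module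
    rw [hxy] at h
    have h0 : (fun t : ℝ => φ (x + t • (y - x))) 0 = φ x := by simp
    rw [slope_def_field]
    simp only [zero_smul, add_zero, sub_zero]
    rw [div_le_iff₀ ht.1]
    simp only [smul_eq_mul] at h
    nlinarith [h]
  have htend : Filter.Tendsto (slope (fun t : ℝ => φ (x + t • (y - x))) 0)
      (nhdsWithin 0 (Set.Ioi 0)) (nhds d) := by
    have := hasDerivAt_iff_tendsto_slope.mp hd
    exact this.mono_left (nhdsWithin_mono 0 (fun t ht => ne_of_gt ht))
  have hle : d ≤ φ y - φ x := by
    refine le_of_tendsto htend ?_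
    filter_upwards [Ioc_mem_nhdsGT_of_mem (Set.mem_Ico.mpr ⟨le_refl 0, zero_lt_one⟩)] with t ht
    exact key t ht
  linarith


lemma descent_lemma (f : E → ℝ) (f' : E → E) (L : ℝ) (hL : 0 ≤ L)
    (hf : ∀ x, HasGradientAt f (f' x) x) (hlip : LipschitzWith L.toNNReal f')
    (x y : E) : f y ≤ f x + ⟪f' x, y - x⟫ + L / 2 * ‖y - x‖ ^ 2 := by
  set v := y - x with hv
  set K := L * ‖v‖ ^ 2 with hK
  set φ : ℝ → ℝ := fun t => f x + t * ⟪f' x, v⟫ + K * t ^ 2 / 2 - f (x + t • v) with hφ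
  have hφd : ∀ t : ℝ, HasDerivAt φ (⟪f' x, v⟫ + K * t - ⟪f' (x + t • v), v⟫) t := by
    intro t
    have h1 := line_hasDerivAt f f' hf x v t
    have h2 : HasDerivAt (fun t : ℝ => f x + t * ⟪f' x, v⟫ + K * t ^ 2 / 2)
        (⟪f' x, v⟫ + K * t) t := by
      have ha : HasDerivAt (fun t : ℝ => t * ⟪f' x, v⟫) ⟪f' x, v⟫ t := by
        simpa using (hasDerivAt_id t).mul_const ⟪f' x, v⟫
      have hb : HasDerivAt (fun t : ℝ => K * t ^ 2 / 2) (K * t) t := by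
        have := ((hasDerivAt_pow 2 t).const_mul K).div_const 2
        simpa using this.congr_deriv (by ring)
      exact ((ha.const_add (f x)).add hb)
    exact h2.sub h1
  have hmono : MonotoneOn φ (Set.Icc (0:ℝ) 1) := by
    apply monotoneOn_of_deriv_nonneg (convex_Icc 0 1)
    · exact (Differentiable.continuous (fun t => (hφd t).differentiableAt)).continuousOn
    · exact fun t _ => ((hφd t).differentiableAt).differentiableWithinAt
    · intro t ht
      rw [interior_Icc] at ht
      rw [(hφd t).deriv, hK]
      have hb : ⟪f' (x + t • v), v⟫ - ⟪f' x, v⟫ ≤ L * ‖v‖ ^ 2 * t := by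
        have h1 : ⟪f' (x + t • v) - f' x, v⟫ ≤ ‖f' (x + t • v) - f' x‖ * ‖v‖ :=
          real_inner_le_norm _ _
        have h2 : ‖f' (x + t • v) - f' x‖ ≤ L * ‖t • v‖ := by
          have := hlip.dist_le_mul (x + t • v) x
          rw [Real.coe_toNNReal L hL] at this
          simpa [dist_eq_norm] using this
        have h3 : ‖t • v‖ = t * ‖v‖ := by
          rw [norm_smul, Real.norm_eq_abs, abs_of_pos ht.1]
        rw [inner_sub_left] at h1
        rw [h3] at h2
        have h4 : (0:ℝ) ≤ ‖v‖ := norm_nonneg _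
        nlinarith [h1, mul_le_mul_of_nonneg_right h2 h4]
      linarith
  have h01 := hmono (Set.left_mem_Icc.mpr zero_le_one) (Set.right_mem_Icc.mpr zero_le_one)
    zero_le_one
  have hφ0 : φ 0 = 0 := by simp [hφ]
  have hφ1 : φ 1 = f x + ⟪f' x, v⟫ + K / 2 - f y := by
    simp [hφ, hv]
  rw [hφ0, hφ1] at h01
  rw [hv] at hK
  nlinarith [h01]


lemma prox_subgrad (ψ : E → ℝ) (hψ : ConvexOn ℝ Set.univ ψ) (η : ℝ) (hη : 0 < η)
    (u xk z : E)
    (hprox : ∀ w, η * ψ xk + ‖xk - u‖ ^ 2 / 2 ≤ η * ψ w + ‖w - u‖ ^ 2 / 2) :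
    η * ψ xk + ⟪u - xk, z - xk⟫ ≤ η * ψ z := by
  set C := ‖z - xk‖ ^ 2 with hC
  have key : ∀ t : ℝ, t ∈ Set.Ioc (0:ℝ) 1 →
      η * ψ xk + ⟪u - xk, z - xk⟫ ≤ η * ψ z + t / 2 * C := by
    intro t ht
    have h := hprox (xk + t • (z - xk))
    have hconv := hψ.2 (Set.mem_univ xk) (Set.mem_univ z)
      (show (0:ℝ) ≤ 1 - t by linarith [ht.2]) ht.1.le (by ring : (1 - t) + t = 1)
    have hxy : (1 - t) • xk + t • z = xk + t • (z - xk) := by module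
    rw [hxy] at hconv
    simp only [smul_eq_mul] at hconv
    have hnorm : ‖xk + t • (z - xk) - u‖ ^ 2
        = ‖xk - u‖ ^ 2 + 2 * (t * ⟪xk - u, z - xk⟫) + t ^ 2 * C := by
      have hdec : xk + t • (z - xk) - u = (xk - u) + t • (z - xk) := by module
      rw [hdec, norm_add_sq_real, real_inner_smul_right, norm_smul, Real.norm_eq_abs,
        mul_pow, sq_abs, hC]
    rw [hnorm] at h
    have hstep : 0 ≤ η * (ψ z - ψ xk) + ⟪xk - u, z - xk⟫ + t / 2 * C := by
      have ht0 := ht.1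
      have h2 : 0 ≤ t * (η * (ψ z - ψ xk) + ⟪xk - u, z - xk⟫ + t / 2 * C) := by
        nlinarith [h, hconv]
      nlinarith [h2, ht0]
    have hflip : ⟪u - xk, z - xk⟫ = -⟪xk - u, z - xk⟫ := by
      rw [show u - xk = -(xk - u) by module, inner_neg_left]
    linarith [hstep, hflip.le, hflip.ge]
  have hC0 : 0 ≤ C := by positivity
  by_contra hcon
  push_neg at hcon
  set a := η * ψ z - (η * ψ xk + ⟪u - xk, z - xk⟫) with ha
  have haneg : a < 0 := by simp only [ha]; linarith
  rcases eq_or_lt_of_le hC0 with hC0' | hCpos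
  · have := key 1 (Set.mem_Ioc.mpr ⟨zero_lt_one, le_refl 1⟩)
    rw [← hC0'] at this
    simp only [ha] at haneg
    linarith
  · set t := min 1 (-a / C) with htdef
    have ht1 : t ≤ 1 := min_le_left _ _
    have htpos : 0 < t := lt_min zero_lt_one (div_pos (by linarith) hCpos)
    have htC : t * C ≤ -a := by
      have : t ≤ -a / C := min_le_right _ _
      calc t * C ≤ (-a / C) * C := by nlinarith
        _ = -a := by field_simp
    have := key t (Set.mem_Ioc.mpr ⟨htpos, ht1⟩)
    simp only [ha] at htC haneg
    linarith
end Aux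

set_option maxHeartbeats 1000000 in
theorem stmt13 {p : ℕ}
    (f ψ : EuclideanSpace ℝ (Fin p) → ℝ)
    (f' : EuclideanSpace ℝ (Fin p) → EuclideanSpace ℝ (Fin p))
    (L μ γ0 γ δ η d0star : ℝ)
    (xkm1 xk xstar : EuclideanSpace ℝ (Fin p))
    (hf : ∀ x, HasGradientAt f (f' x) x)
    (hL0 : 0 ≤ L) (hlip : LipschitzWith L.toNNReal f')
    (hμ : 0 ≤ μ)
    (hsc : ConvexOn ℝ Set.univ (fun x => f x - μ / 2 * ‖x‖ ^ 2))
    (hψ : ConvexOn ℝ Set.univ ψ)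
    (hmin : ∀ x, f xstar + ψ xstar ≤ f x + ψ x)
    (hη : 0 < η) (hηL : η ≤ 1 / L)
    (hγ0 : μ ≤ γ0)
    (hγ : γ = (1 - δ) * γ0 + μ * δ)
    (hδdef : δ = η * γ) (hδ0 : 0 < δ) (hδ1 : δ ≤ 1)
    (hprox : ∀ z, η * ψ xk + ‖xk - (xkm1 - η • f' xkm1)‖ ^ 2 / 2
        ≤ η * ψ z + ‖z - (xkm1 - η • f' xkm1)‖ ^ 2 / 2) :
    let ψ'k := (1 / η) • (xkm1 - xk) - f' xkm1
    let d0 : EuclideanSpace ℝ (Fin p) → ℝ := fun x => d0star + γ0 / 2 * ‖x - xkm1‖ ^ 2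
    let dk : EuclideanSpace ℝ (Fin p) → ℝ := fun x =>
      (1 - δ) * d0 x +
        δ * (f xkm1 + ⟪f' xkm1, x - xkm1⟫ + μ / 2 * ‖x - xkm1‖ ^ 2
              + ψ xk + ⟪ψ'k, x - xk⟫)
    (∀ x, dk xk ≤ dk x) ∧
    (∀ x, dk x = dk xk + γ / 2 * ‖x - xk‖ ^ 2) ∧
    δ * (f xk + ψ xk - (f xstar + ψ xstar)) + dk xstar - dk xk
      ≤ (1 - δ) * (d0 xstar - d0 xkm1) := by
  intro ψ'k d0 dk
  have hηne : η ≠ 0 := ne_of_gt hη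
  have hL : 0 < L := by
    rcases lt_or_eq_of_le hL0 with h | h
    · exact h
    · exfalso; rw [← h] at hηL; simp at hηL; linarith
  have hγpos : 0 < γ := by
    have h1 : γ = δ / η := by rw [hδdef]; field_simp
    rw [h1]; positivity
  have hδη : δ * (1 / η) = γ := by rw [hδdef]; field_simp
  have hδL : δ * L ≤ γ := by
    have h1 : η * L ≤ 1 := by
      rw [le_div_iff₀ hL] at hηL
      exact hηL
    calc δ * L = γ * (η * L) := by rw [hδdef]; ring
      _ ≤ γ * 1 := by nlinarith
      _ = γ := by ring
  have key : ∀ x, dk x = dk xk + γ / 2 * ‖x - xk‖ ^ 2 := by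
    intro x
    have e1 : ‖x - xkm1‖ ^ 2
        = ‖x - xk‖ ^ 2 + 2 * ⟪x - xk, xk - xkm1⟫ + ‖xk - xkm1‖ ^ 2 := by
      rw [show x - xkm1 = (x - xk) + (xk - xkm1) by module, norm_add_sq_real]
    have e2 : ⟪f' xkm1, x - xkm1⟫ = ⟪f' xkm1, x - xk⟫ + ⟪f' xkm1, xk - xkm1⟫ := by
      rw [show x - xkm1 = (x - xk) + (xk - xkm1) by module, inner_add_right]
    have e3 : ⟪ψ'k, x - xk⟫
        = (1 / η) * ⟪xkm1 - xk, x - xk⟫ - ⟪f' xkm1, x - xk⟫ := by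
      simp only [ψ'k, inner_sub_left, real_inner_smul_left]
    have e4 : ⟪xkm1 - xk, x - xk⟫ = -⟪x - xk, xk - xkm1⟫ := by
      rw [real_inner_comm, show xkm1 - xk = -(xk - xkm1) by module, inner_neg_right,
        real_inner_comm]
    have e5 : ⟪ψ'k, xk - xk⟫ = 0 := by simp
    simp only [dk, d0]
    rw [e2, e3, e4, e1, e5]
    set C := ‖x - xk‖ ^ 2
    set I := ⟪x - xk, xk - xkm1⟫
    set B2 := ‖xk - xkm1‖ ^ 2
    set G := ⟪f' xkm1, x - xk⟫
    set F2 := ⟪f' xkm1, xk - xkm1⟫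
    field_simp
    linear_combination (-η * C - 2 * η * I) * hγ - 2 * I * hδdef
  refine ⟨?_, key, ?_⟩
  · intro x
    rw [key x]
    nlinarith [sq_nonneg ‖x - xk‖, hγpos]
  · have hdkdiff : dk xstar - dk xk = γ / 2 * ‖xstar - xk‖ ^ 2 := by
      rw [key xstar]; ring
    have hd0diff : d0 xstar - d0 xkm1 = γ0 / 2 * ‖xstar - xkm1‖ ^ 2 := by
      simp only [d0]; rw [sub_self, norm_zero]; ring
    set S := ‖xstar - xk‖ ^ 2 with hS
    set B := ‖xk - xkm1‖ ^ 2 with hB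
    set T := ‖xstar - xkm1‖ ^ 2 with hTd
    have hB0 : 0 ≤ B := by positivity
    have hdesc := descent_lemma f f' L hL0 hf hlip xkm1 xk
    have hstrong : f xkm1 + ⟪f' xkm1, xstar - xkm1⟫ + μ / 2 * T ≤ f xstar := by
      have hgrad : HasDerivAt
          (fun t : ℝ => f (xkm1 + t • (xstar - xkm1)) - μ / 2 * ‖xkm1 + t • (xstar - xkm1)‖ ^ 2)
          (⟪f' xkm1, xstar - xkm1⟫ - μ * ⟪xkm1, xstar - xkm1⟫) 0 := by
        have h1 := line_hasDerivAt f f' hf xkm1 (xstar - xkm1) 0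
        rw [zero_smul, add_zero] at h1
        have h2 : HasDerivAt
            (fun t : ℝ => μ / 2 * ‖xkm1 + t • (xstar - xkm1)‖ ^ 2)
            (μ * ⟪xkm1, xstar - xkm1⟫) 0 := by
          have heq : (fun t : ℝ => μ / 2 * ‖xkm1 + t • (xstar - xkm1)‖ ^ 2)
              = fun t : ℝ => μ / 2 * (‖xkm1‖ ^ 2 + 2 * ⟪xkm1, xstar - xkm1⟫ * t
                  + ‖xstar - xkm1‖ ^ 2 * t ^ 2) := by
            funext t
            rw [norm_add_sq_real, real_inner_smul_right, norm_smul, Real.norm_eq_abs,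
              mul_pow, sq_abs]
            ring
          rw [heq]
          have hpoly : HasDerivAt
              (fun t : ℝ => ‖xkm1‖ ^ 2 + 2 * ⟪xkm1, xstar - xkm1⟫ * t
                  + ‖xstar - xkm1‖ ^ 2 * t ^ 2)
              (2 * ⟪xkm1, xstar - xkm1⟫ + ‖xstar - xkm1‖ ^ 2 * (2 * 0)) 0 := by
            have ha : HasDerivAt (fun t : ℝ => 2 * ⟪xkm1, xstar - xkm1⟫ * t)
                (2 * ⟪xkm1, xstar - xkm1⟫) 0 := by
              simpa using (hasDerivAt_id (0:ℝ)).const_mul (2 * ⟪xkm1, xstar - xkm1⟫)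
            have hb : HasDerivAt (fun t : ℝ => ‖xstar - xkm1‖ ^ 2 * t ^ 2)
                (‖xstar - xkm1‖ ^ 2 * (2 * 0)) 0 := by
              simpa using (hasDerivAt_pow 2 (0:ℝ)).const_mul (‖xstar - xkm1‖ ^ 2)
            exact (ha.const_add _).add hb
          have h3 := hpoly.const_mul (μ / 2)
          have h4 : μ / 2 * (2 * ⟪xkm1, xstar - xkm1⟫ + ‖xstar - xkm1‖ ^ 2 * (2 * 0))
              = μ * ⟪xkm1, xstar - xkm1⟫ := by ring
          rw [h4] at h3
          exact h3
        exact h1.sub h2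
      have hcs := convex_slope_le (fun x => f x - μ / 2 * ‖x‖ ^ 2) hsc xkm1 xstar _ hgrad
      have hexp : ‖xstar‖ ^ 2
          = ‖xkm1‖ ^ 2 + 2 * ⟪xkm1, xstar - xkm1⟫ + ‖xstar - xkm1‖ ^ 2 := by
        have : xstar = xkm1 + (xstar - xkm1) := by module
        rw [this, norm_add_sq_real, show xkm1 + (xstar - xkm1) - xkm1 = xstar - xkm1 by module]
      rw [hTd]
      have hm2 : (0:ℝ) ≤ μ / 2 := by linarith
      linarith [hcs, mul_le_mul_of_nonneg_left hexp.le hm2,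
        mul_le_mul_of_nonneg_left hexp.ge hm2]
    have hsub : η * ψ xk + ⟪(xkm1 - η • f' xkm1) - xk, xstar - xk⟫ ≤ η * ψ xstar :=
      prox_subgrad ψ hψ η hη (xkm1 - η • f' xkm1) xk xstar hprox
    have hsubJ : η * ψ xk + ⟪xkm1 - xk, xstar - xk⟫ - η * ⟪f' xkm1, xstar - xk⟫
        ≤ η * ψ xstar := by
      have hdec : ⟪(xkm1 - η • f' xkm1) - xk, xstar - xk⟫
          = ⟪xkm1 - xk, xstar - xk⟫ - η * ⟪f' xkm1, xstar - xk⟫ := by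
        rw [show (xkm1 - η • f' xkm1) - xk = (xkm1 - xk) - η • f' xkm1 by module,
          inner_sub_left, real_inner_smul_left]
      linarith [hsub, hdec.le, hdec.ge]
    have hsub2 : δ * ψ xk + γ * ⟪xkm1 - xk, xstar - xk⟫ - δ * ⟪f' xkm1, xstar - xk⟫
        ≤ δ * ψ xstar := by
      have h := mul_le_mul_of_nonneg_left hsubJ hγpos.le
      calc δ * ψ xk + γ * ⟪xkm1 - xk, xstar - xk⟫ - δ * ⟪f' xkm1, xstar - xk⟫
          = γ * (η * ψ xk + ⟪xkm1 - xk, xstar - xk⟫ - η * ⟪f' xkm1, xstar - xk⟫) := by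
            rw [hδdef]; ring
        _ ≤ γ * (η * ψ xstar) := h
        _ = δ * ψ xstar := by rw [hδdef]; ring
    have e2s : ⟪f' xkm1, xstar - xkm1⟫
        = ⟪f' xkm1, xstar - xk⟫ + ⟪f' xkm1, xk - xkm1⟫ := by
      rw [show xstar - xkm1 = (xstar - xk) + (xk - xkm1) by module, inner_add_right]
    have hT : T = S + B - 2 * ⟪xkm1 - xk, xstar - xk⟫ := by
      rw [hTd, hS, hB, show xstar - xkm1 = (xstar - xk) + (xk - xkm1) by module,
        norm_add_sq_real]
      have hsw : ⟪xstar - xk, xk - xkm1⟫ = -⟪xkm1 - xk, xstar - xk⟫ := by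
        rw [real_inner_comm, show xkm1 - xk = -(xk - xkm1) by module, inner_neg_left,
          real_inner_comm, neg_neg]
      rw [hsw]; ring
    have hγT : γ * T = ((1 - δ) * γ0 + μ * δ) * T := by rw [← hγ]
    have hγTS : γ * T = γ * S + γ * B - 2 * γ * ⟪xkm1 - xk, xstar - xk⟫ := by
      rw [hT]; ring
    have hdescδ := mul_le_mul_of_nonneg_left hdesc hδ0.le
    have hstrongδ := mul_le_mul_of_nonneg_left hstrong hδ0.le
    have hLB : 0 ≤ (γ - δ * L) * B := mul_nonneg (by linarith) hB0
    rw [show δ * (f xk + ψ xk - (f xstar + ψ xstar)) + dk xstar - dk xk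
        = δ * (f xk + ψ xk - (f xstar + ψ xstar)) + (dk xstar - dk xk) by ring,
      hdkdiff, hd0diff]
    rw [e2s] at hstrongδ
    rw [← hB] at hdescδ
    linarith [hdescδ, hstrongδ, hsub2, hLB, hγT, hγTS]
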